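/- For every integer n ≥ 9, the complete symmetric sum Σ over 1 ≤ i₁ ≤ ... ≤ i₇ ≤ n-1 of Π_{ν=1}^{7} cos(2πi_ν/n) equals -n(n+4)(n+5)/384. -/

import Mathlib

open Real Finset

/-- The complete homogeneous symmetric sum of degree `r` in the variables
`f k`, `k ∈ s`: the sum over all multisets of size `r` from `s` of the product
of the corresponding values (i.e. over `1 ≤ i₁ ≤ ⋯ ≤ i_r`, all in `s`). -/
noncomputable def completeSym (s : Finset ℕ) (r : ℕ) (f : ℕ → ℝ) : ℝ :=
  ∑ m ∈ s.sym r, (Multiset.map f (Sym.toMultiset m)).prod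


lemma cosSum (n m : ℕ) (hm : 1 ≤ m) (hmn : m < n) :
    ∑ k ∈ Icc 1 (n-1), Real.cos (m * (2 * π * k / n)) = -1 := by
  have hn0 : (n:ℂ) ≠ 0 := by exact_mod_cast (by omega : n ≠ 0)
  set z : ℂ := Complex.exp (2 * π * Complex.I * m / n) with hz
  have hzn : z ^ n = 1 := by
    rw [hz, ← Complex.exp_nat_mul]
    have : (n:ℂ) * (2 * π * Complex.I * m / n) = m * (2 * π * Complex.I) := by
      field_simp
    rw [this, Complex.exp_nat_mul_two_pi_mul_I]
  have hz1 : z ≠ 1 := by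
    rw [hz, Ne, Complex.exp_eq_one_iff]
    rintro ⟨j, hj⟩
    have hπ : (π:ℂ) ≠ 0 := by exact_mod_cast Real.pi_ne_zero
    have h2 : (2:ℂ) * π * Complex.I ≠ 0 := by
      simp [Complex.I_ne_zero, hπ]
    have hmj : (m:ℂ) = j * n := by
      field_simp at hj
      have : (2 * π * Complex.I) * m = (2 * π * Complex.I) * (j * n) := by linear_combination (2 * π * Complex.I) * hj
      exact mul_left_cancel₀ h2 this
    have hmj' : (m:ℤ) = j * n := by exact_mod_cast hmj
    rcases le_or_gt j 0 with h | h
    · have : j * (n:ℤ) ≤ 0 := mul_nonpos_of_nonpos_of_nonneg h (by positivity)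
      omega
    · have : (n:ℤ) ≤ j * n := le_mul_of_one_le_left (by positivity) h
      omega
  have hsum : ∑ k ∈ range n, z ^ k = 0 := by
    rw [geom_sum_eq hz1, hzn]; simp
  have hre : ∀ k : ℕ, (z ^ k).re = Real.cos (m * (2 * π * k / n)) := by
    intro k
    rw [hz, ← Complex.exp_nat_mul]
    have : (k:ℂ) * (2 * π * Complex.I * m / n) = ((m * (2 * π * k / n) : ℝ) : ℂ) * Complex.I := by
      push_cast; field_simp
    rw [this, Complex.exp_ofReal_mul_I_re]
  have hfull : ∑ k ∈ range n, Real.cos (m * (2 * π * k / n)) = 0 := by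
    have := congrArg Complex.re hsum
    rwa [Complex.re_sum, Finset.sum_congr rfl (fun k _ => hre k)] at this
  have hins : range n = insert 0 (Icc 1 (n-1)) := by
    ext k; simp only [mem_range, mem_insert, mem_Icc]; omega
  rw [hins, Finset.sum_insert (by simp)] at hfull
  simp only [Nat.cast_zero, mul_zero, zero_div, mul_zero, Real.cos_zero] at hfull
  linarith


lemma cons_step (s : Finset ℕ) (f : ℕ → ℝ) (k : ℕ) (hk : k ∈ s) (r : ℕ) :
    ∑ m ∈ s.sym (r+1), ((Multiset.count k (Sym.toMultiset m) : ℝ) * (Multiset.map f (Sym.toMultiset m)).prod)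
    = f k * (completeSym s r f
        + ∑ m ∈ s.sym r, ((Multiset.count k (Sym.toMultiset m) : ℝ) * (Multiset.map f (Sym.toMultiset m)).prod)) := by
  classical
  have hfilter :
      ∑ m ∈ (s.sym (r+1)).filter (fun m => k ∈ m),
        ((Multiset.count k (Sym.toMultiset m) : ℝ) * (Multiset.map f (Sym.toMultiset m)).prod)
      = ∑ m ∈ s.sym (r+1),
        ((Multiset.count k (Sym.toMultiset m) : ℝ) * (Multiset.map f (Sym.toMultiset m)).prod) := by
    apply Finset.sum_filter_of_ne
    intro m _ hne
    by_contra hkm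
    have : Multiset.count k (Sym.toMultiset m) = 0 := Multiset.count_eq_zero.mpr hkm
    rw [this] at hne; simp at hne
  have hbij :
      ∑ m ∈ s.sym r,
        (((Multiset.count k (Sym.toMultiset m) : ℝ) + 1) * (f k * (Multiset.map f (Sym.toMultiset m)).prod))
      = ∑ m ∈ (s.sym (r+1)).filter (fun m => k ∈ m),
        ((Multiset.count k (Sym.toMultiset m) : ℝ) * (Multiset.map f (Sym.toMultiset m)).prod) := by
    apply Finset.sum_bij (fun m _ => k ::ₛ m)
    · intro a ha
      simp only [Finset.mem_filter, Finset.mem_sym_iff] at ha ⊢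
      refine ⟨fun b hb => ?_, Sym.mem_cons_self k a⟩
      rcases Sym.mem_cons.mp hb with h | h
      · exact h ▸ hk
      · exact ha b h
    · intro a _ b _ hab
      have : (Sym.toMultiset (k ::ₛ a)) = Sym.toMultiset (k ::ₛ b) := by rw [hab]
      rw [Sym.coe_cons, Sym.coe_cons] at this
      exact Subtype.ext ((Multiset.cons_inj_right k).mp this)
    · intro m hm
      simp only [Finset.mem_filter, Finset.mem_sym_iff] at hm
      obtain ⟨hms, hkm⟩ := hm
      refine ⟨m.erase k hkm, ?_, ?_⟩
      · simp only [Finset.mem_sym_iff]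
        intro b hb
        exact hms b (Multiset.mem_of_mem_erase (show b ∈ (Sym.toMultiset m).erase k by rw [← Sym.coe_erase hkm]; exact hb))
      · exact Sym.cons_erase hkm
    · intro a _
      rw [Sym.coe_cons, Multiset.count_cons_self, Multiset.map_cons, Multiset.prod_cons]
      push_cast
      ring
  rw [← hfilter, ← hbij, completeSym, mul_add, Finset.mul_sum, Finset.mul_sum,
    ← Finset.sum_add_distrib]
  exact Finset.sum_congr rfl fun m _ => by ring

lemma count_sum (s : Finset ℕ) (f : ℕ → ℝ) (k : ℕ) (hk : k ∈ s) : ∀ r : ℕ,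
    ∑ m ∈ s.sym r, ((Multiset.count k (Sym.toMultiset m) : ℝ) * (Multiset.map f (Sym.toMultiset m)).prod)
    = ∑ j ∈ range r, f k ^ (j+1) * completeSym s (r - (j+1)) f := by
  intro r
  induction r with
  | zero => simp [Finset.sym_zero]; exact Or.inl (Multiset.notMem_zero k)
  | succ r ih =>
      rw [cons_step s f k hk r, ih, Finset.sum_range_succ']
      simp only [Nat.add_sub_cancel, pow_one, Nat.succ_sub_succ_eq_sub]
      rw [mul_add, Finset.mul_sum]
      rw [add_comm]
      congr 1
      apply Finset.sum_congr rfl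
      intro j _
      ring
      simp

lemma newton (s : Finset ℕ) (f : ℕ → ℝ) (r : ℕ) :
    (r : ℝ) * completeSym s r f
    = ∑ j ∈ range r, (∑ k ∈ s, f k ^ (j+1)) * completeSym s (r - (j+1)) f := by
  classical
  have hcount : ∀ m ∈ s.sym r, ∑ k ∈ s, (Multiset.count k (Sym.toMultiset m) : ℝ) = r := by
    intro m hm
    have hsub : (Sym.toMultiset m).toFinset ⊆ s := by
      intro b hb
      exact (Finset.mem_sym_iff.mp hm) b (Multiset.mem_toFinset.mp hb)
    have h1 : ∑ k ∈ s, Multiset.count k (Sym.toMultiset m)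
        = ∑ k ∈ (Sym.toMultiset m).toFinset, Multiset.count k (Sym.toMultiset m) := by
      symm
      apply Finset.sum_subset hsub
      intro x _ hx
      exact Multiset.count_eq_zero.mpr (fun h => hx (Multiset.mem_toFinset.mpr h))
    have h2 : ∑ k ∈ (Sym.toMultiset m).toFinset, Multiset.count k (Sym.toMultiset m)
        = Multiset.card (Sym.toMultiset m) := Multiset.toFinset_sum_count_eq _
    have h3 : Multiset.card (Sym.toMultiset m) = r := m.2
    rw [← Nat.cast_sum, h1, h2, h3]
  calc (r : ℝ) * completeSym s r f
      = ∑ m ∈ s.sym r, (∑ k ∈ s, (Multiset.count k (Sym.toMultiset m) : ℝ)) * (Multiset.map f (Sym.toMultiset m)).prod := by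
        rw [completeSym, Finset.mul_sum]
        exact Finset.sum_congr rfl fun m hm => by rw [hcount m hm]
    _ = ∑ k ∈ s, ∑ m ∈ s.sym r, (Multiset.count k (Sym.toMultiset m) : ℝ) * (Multiset.map f (Sym.toMultiset m)).prod := by
        rw [Finset.sum_comm]
        exact Finset.sum_congr rfl fun m _ => by rw [Finset.sum_mul]
    _ = ∑ k ∈ s, ∑ j ∈ range r, f k ^ (j+1) * completeSym s (r - (j+1)) f :=
        Finset.sum_congr rfl fun k hk => count_sum s f k hk r
    _ = ∑ j ∈ range r, (∑ k ∈ s, f k ^ (j+1)) * completeSym s (r - (j+1)) f := by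
        rw [Finset.sum_comm]
        exact Finset.sum_congr rfl fun j _ => by rw [Finset.sum_mul]

lemma cosrec (a b : ℝ) : Real.cos (a + b) = 2 * Real.cos a * Real.cos b - Real.cos (a - b) := by
  rw [Real.cos_add, Real.cos_sub]; ring

lemma cos4 (x : ℝ) : Real.cos (4 * x) = 8 * Real.cos x ^ 4 - 8 * Real.cos x ^ 2 + 1 := by
  have h : (4:ℝ) * x = 2 * (2 * x) := by ring
  rw [h, Real.cos_two_mul, Real.cos_two_mul]; ring

lemma cos5 (x : ℝ) : Real.cos (5 * x) = 16 * Real.cos x ^ 5 - 20 * Real.cos x ^ 3 + 5 * Real.cos x := by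
  have h : (5:ℝ) * x = 4 * x + x := by ring
  rw [h, cosrec, show (4:ℝ) * x - x = 3 * x by ring, cos4, Real.cos_three_mul]; ring

lemma cos6 (x : ℝ) : Real.cos (6 * x) = 32 * Real.cos x ^ 6 - 48 * Real.cos x ^ 4 + 18 * Real.cos x ^ 2 - 1 := by
  have h : (6:ℝ) * x = 5 * x + x := by ring
  rw [h, cosrec, show (5:ℝ) * x - x = 4 * x by ring, cos5, cos4]; ring

lemma cos7 (x : ℝ) : Real.cos (7 * x) = 64 * Real.cos x ^ 7 - 112 * Real.cos x ^ 5 + 56 * Real.cos x ^ 3 - 7 * Real.cos x := by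
  have h : (7:ℝ) * x = 6 * x + x := by ring
  rw [h, cosrec, show (6:ℝ) * x - x = 5 * x by ring, cos6, cos5]; ring

theorem h7_at_cosine_points (n : ℕ) (hn : 9 ≤ n) :
    completeSym (Finset.Icc 1 (n - 1)) 7 (fun k => Real.cos (2 * π * k / n))
    = -(n * (n + 4) * (n + 5)) / 384 := by
  set s : Finset ℕ := Finset.Icc 1 (n-1) with hs
  set f : ℕ → ℝ := fun k => Real.cos (2 * π * k / n) with hf
  have hcard : ((s.card : ℝ)) = n - 1 := by
    rw [hs, Nat.card_Icc]
    have : n - 1 + 1 - 1 = n - 1 := by omega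
    rw [this, Nat.cast_sub (by omega)]
    norm_num
  have C : ∀ m : ℕ, 1 ≤ m → m < n →
      ∑ k ∈ s, Real.cos (m * (2 * π * k / n)) = -1 := fun m h1 h2 => cosSum n m h1 h2
  have c1 : ∑ k ∈ s, Real.cos (2 * π * k / n) = -1 := by
    have := C 1 (by norm_num) (by omega)
    simpa using this
  have c2 : ∑ k ∈ s, Real.cos (2 * (2 * π * k / n)) = -1 := by
    have := C 2 (by norm_num) (by omega); exact_mod_cast this
  have c3 : ∑ k ∈ s, Real.cos (3 * (2 * π * k / n)) = -1 := by
    have := C 3 (by norm_num) (by omega); exact_mod_cast this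
  have c4 : ∑ k ∈ s, Real.cos (4 * (2 * π * k / n)) = -1 := by
    have := C 4 (by norm_num) (by omega); exact_mod_cast this
  have c5 : ∑ k ∈ s, Real.cos (5 * (2 * π * k / n)) = -1 := by
    have := C 5 (by norm_num) (by omega); exact_mod_cast this
  have c6 : ∑ k ∈ s, Real.cos (6 * (2 * π * k / n)) = -1 := by
    have := C 6 (by norm_num) (by omega); exact_mod_cast this
  have c7 : ∑ k ∈ s, Real.cos (7 * (2 * π * k / n)) = -1 := by
    have := C 7 (by norm_num) (by omega); exact_mod_cast this
  have p1' : ∑ k ∈ s, f k = -1 := c1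
  have p1 : ∑ k ∈ s, f k ^ 1 = -1 := by
    simpa using p1'
  have p2 : ∑ k ∈ s, f k ^ 2 = n / 2 - 1 := by
    have hpt : ∀ x : ℝ, Real.cos x ^ 2 = (Real.cos (2 * x) + 1) / 2 := by
      intro x; rw [Real.cos_two_mul]; ring
    have hstep := Finset.sum_congr rfl (fun k (_ : k ∈ s) => hpt (2 * π * (k:ℝ) / n))
    rw [show (∑ k ∈ s, f k ^ _) = _ from hstep]
    simp only [← Finset.sum_div, Finset.sum_add_distrib, Finset.sum_const, nsmul_eq_mul, mul_one]
    rw [c2, hcard]; ring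
  have p3 : ∑ k ∈ s, f k ^ 3 = -1 := by
    have hpt : ∀ x : ℝ, Real.cos x ^ 3 = (Real.cos (3 * x) + 3 * Real.cos x) / 4 := by
      intro x; rw [Real.cos_three_mul]; ring
    have hstep := Finset.sum_congr rfl (fun k (_ : k ∈ s) => hpt (2 * π * (k:ℝ) / n))
    rw [show (∑ k ∈ s, f k ^ _) = _ from hstep]
    simp only [← Finset.sum_div, Finset.sum_add_distrib, ← Finset.mul_sum]
    rw [c3, c1]; ring
  have p4 : ∑ k ∈ s, f k ^ 4 = 3 * n / 8 - 1 := by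
    have hpt : ∀ x : ℝ, Real.cos x ^ 4 = (Real.cos (4 * x) + 4 * Real.cos (2 * x) + 3) / 8 := by
      intro x; rw [cos4, Real.cos_two_mul]; ring
    have hstep := Finset.sum_congr rfl (fun k (_ : k ∈ s) => hpt (2 * π * (k:ℝ) / n))
    rw [show (∑ k ∈ s, f k ^ _) = _ from hstep]
    simp only [← Finset.sum_div, Finset.sum_add_distrib, ← Finset.mul_sum, Finset.sum_const,
      nsmul_eq_mul, mul_one]
    rw [c4, c2, hcard]; ring
  have p5 : ∑ k ∈ s, f k ^ 5 = -1 := by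
    have hpt : ∀ x : ℝ, Real.cos x ^ 5
        = (Real.cos (5 * x) + 5 * Real.cos (3 * x) + 10 * Real.cos x) / 16 := by
      intro x; rw [cos5, Real.cos_three_mul]; ring
    have hstep := Finset.sum_congr rfl (fun k (_ : k ∈ s) => hpt (2 * π * (k:ℝ) / n))
    rw [show (∑ k ∈ s, f k ^ _) = _ from hstep]
    simp only [← Finset.sum_div, Finset.sum_add_distrib, ← Finset.mul_sum]
    rw [c5, c3, c1]; ring
  have p6 : ∑ k ∈ s, f k ^ 6 = 5 * n / 16 - 1 := by
    have hpt : ∀ x : ℝ, Real.cos x ^ 6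
        = (Real.cos (6 * x) + 6 * Real.cos (4 * x) + 15 * Real.cos (2 * x) + 10) / 32 := by
      intro x; rw [cos6, cos4, Real.cos_two_mul]; ring
    have hstep := Finset.sum_congr rfl (fun k (_ : k ∈ s) => hpt (2 * π * (k:ℝ) / n))
    rw [show (∑ k ∈ s, f k ^ _) = _ from hstep]
    simp only [← Finset.sum_div, Finset.sum_add_distrib, ← Finset.mul_sum, Finset.sum_const,
      nsmul_eq_mul, mul_one]
    rw [c6, c4, c2, hcard]; ring
  have p7 : ∑ k ∈ s, f k ^ 7 = -1 := by
    have hpt : ∀ x : ℝ, Real.cos x ^ 7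
        = (Real.cos (7 * x) + 7 * Real.cos (5 * x) + 21 * Real.cos (3 * x)
            + 35 * Real.cos x) / 64 := by
      intro x; rw [cos7, cos5, Real.cos_three_mul]; ring
    have hstep := Finset.sum_congr rfl (fun k (_ : k ∈ s) => hpt (2 * π * (k:ℝ) / n))
    rw [show (∑ k ∈ s, f k ^ _) = _ from hstep]
    simp only [← Finset.sum_div, Finset.sum_add_distrib, ← Finset.mul_sum]
    rw [c7, c5, c3, c1]; ring
  have H0 : completeSym s 0 f = 1 := by
    simp only [completeSym, Finset.sym_zero, Finset.sum_singleton]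
    rfl
  have N : ∀ r : ℕ, (r : ℝ) * completeSym s r f
      = ∑ j ∈ range r, (∑ k ∈ s, f k ^ (j+1)) * completeSym s (r - (j+1)) f :=
    newton s f
  have H1 : completeSym s 1 f = -1 := by
    have := N 1
    simp only [Finset.sum_range_succ, Finset.sum_range_zero] at this
    norm_num [p1, p1', H0] at this
    linarith
  have H2 : completeSym s 2 f = n / 4 := by
    have := N 2
    simp only [Finset.sum_range_succ, Finset.sum_range_zero] at this
    norm_num [p1, p1', p2, H0, H1] at this
    linear_combination this / 2
  have H3 : completeSym s 3 f = -(n / 4) := by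
    have := N 3
    simp only [Finset.sum_range_succ, Finset.sum_range_zero] at this
    norm_num [p1, p1', p2, p3, H0, H1, H2] at this
    linear_combination this / 3
  have H4 : completeSym s 4 f = n * (n + 3) / 32 := by
    have := N 4
    simp only [Finset.sum_range_succ, Finset.sum_range_zero] at this
    norm_num [p1, p1', p2, p3, p4, H0, H1, H2, H3] at this
    linear_combination this / 4
  have H5 : completeSym s 5 f = -(n * (n + 3) / 32) := by
    have := N 5
    simp only [Finset.sum_range_succ, Finset.sum_range_zero] at this
    norm_num [p1, p1', p2, p3, p4, p5, H0, H1, H2, H3, H4] at this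
    linear_combination this / 5
  have H6 : completeSym s 6 f = n * (n + 4) * (n + 5) / 384 := by
    have := N 6
    simp only [Finset.sum_range_succ, Finset.sum_range_zero] at this
    norm_num [p1, p1', p2, p3, p4, p5, p6, H0, H1, H2, H3, H4, H5] at this
    linear_combination this / 6
  have H7 : completeSym s 7 f = -(n * (n + 4) * (n + 5)) / 384 := by
    have := N 7
    simp only [Finset.sum_range_succ, Finset.sum_range_zero] at this
    norm_num [p1, p1', p2, p3, p4, p5, p6, p7, H0, H1, H2, H3, H4, H5, H6] at this
    linear_combination this / 7
  exact H7
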